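/- Each vector field J_r (r ∈ I_1^m ∪ I_2^m) is a Killing vector field of the contravariant metric G: for all indices i, j, the Lie derivative of G along J_r vanishes, i.e. Σ_l ( J_r^l ∂G^{ij}/∂q_l − G^{lj} ∂J_r^i/∂q_l − G^{il} ∂J_r^j/∂q_l ) = 0 identically in q. -/

import Mathlib

noncomputable section

open scoped BigOperators

namespace P3

/-- Extended coordinates: `q_0 = 1`, `q_k = 0` for `k < 0` or `k > n`. -/
def qe (n : ℕ) (q : Fin n → ℝ) (k : ℤ) : ℝ :=
  if h : 1 ≤ k ∧ k ≤ (n : ℤ) then q ⟨(k - 1).toNat, by omega⟩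
  else if k = 0 then 1 else 0

/-- The special conformal Killing tensor `L` in Viète coordinates. -/
def Lmat (n : ℕ) (q : Fin n → ℝ) : Matrix (Fin n) (Fin n) ℝ :=
  Matrix.of fun i j => if (j : ℕ) = 0 then -q i else if (j : ℕ) = (i : ℕ) + 1 then 1 else 0

/-- The metric `G_0` (case `m = 0`) in Viète coordinates. -/
def G0mat (n : ℕ) (q : Fin n → ℝ) : Matrix (Fin n) (Fin n) ℝ :=
  Matrix.of fun i j => qe n q ((i : ℤ) + (j : ℤ) + 1 - (n : ℤ))

/-- The contravariant metric `G = L^m G_0`. -/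
def Gmat (n m : ℕ) (q : Fin n → ℝ) : Matrix (Fin n) (Fin n) ℝ :=
  (Lmat n q) ^ m * G0mat n q

/-- Killing tensors `K_r = Σ_{k=0}^{r-1} q_k L^{r-1-k}` (so `K_1 = Id`). -/
def Kmat (n : ℕ) (q : Fin n → ℝ) (r : ℕ) : Matrix (Fin n) (Fin n) ℝ :=
  ∑ k ∈ Finset.range r, qe n q (k : ℤ) • (Lmat n q) ^ (r - 1 - k)

/-- `A_r = K_r G`, with `A_i = 0` for `i ≤ 0` or `i > n`. -/
def Amat (n m : ℕ) (q : Fin n → ℝ) (r : ℤ) : Matrix (Fin n) (Fin n) ℝ :=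
  if 1 ≤ r ∧ r ≤ (n : ℤ) then Kmat n q r.toNat * Gmat n m q else 0

/-- Entries of `A_r` with 1-based integer indices (0 outside the valid range). -/
def Aent (n m : ℕ) (q : Fin n → ℝ) (r k j : ℤ) : ℝ :=
  if hk : 1 ≤ k ∧ k ≤ (n : ℤ) then
    if hj : 1 ≤ j ∧ j ≤ (n : ℤ) then
      Amat n m q r ⟨(k - 1).toNat, by omega⟩ ⟨(j - 1).toNat, by omega⟩
    else 0
  else 0

/-- `r ∈ I_1^m = {2,…,n−m+1} ∩ {2,…,n}`. -/
def inI1 (n m : ℕ) (r : ℤ) : Prop := 2 ≤ r ∧ r ≤ (n : ℤ) - m + 1 ∧ r ≤ (n : ℤ)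

/-- `r ∈ I_2^m = {n−m+2,…,n}`. -/
def inI2 (n m : ℕ) (r : ℤ) : Prop := (n : ℤ) - m + 2 ≤ r ∧ r ≤ (n : ℤ)

instance (n m : ℕ) (r : ℤ) : Decidable (inI1 n m r) := by unfold inI1; infer_instance
instance (n m : ℕ) (r : ℤ) : Decidable (inI2 n m r) := by unfold inI2; infer_instance

/-- Components `J_r^k` (1-based integer component index `k`) of the Killing
vector fields `J_r`; `J_1 = 0` and `J_i = 0` for `i ≤ 0` or `i > n`. -/
def Jcomp (n m : ℕ) (r : ℤ) (q : Fin n → ℝ) (k : ℤ) : ℝ :=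
  if r = 1 then 0
  else if inI1 n m r then
    if (n : ℤ) + 2 - m - r ≤ k ∧ k ≤ (n : ℤ) - m then
      (((n : ℤ) + 1 - m - k : ℤ) : ℝ) * qe n q ((m : ℤ) + r - n - 2 + k)
    else 0
  else if inI2 n m r then
    if (n : ℤ) + 2 - m ≤ k ∧ k ≤ 2 * (n : ℤ) + 2 - m - r then
      -((((n : ℤ) + 1 - m - k : ℤ) : ℝ) * qe n q ((m : ℤ) + r - n - 2 + k))
    else 0
  else 0

/-- Basic separable potentials for `α ≥ n-1`:  `Vup d = V^{(n-1+d)}`,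
via the forward recursion `V_r^{(α+1)} = V_{r+1}^{(α)} − q_r V_1^{(α)}`. -/
def Vup (n : ℕ) (q : Fin n → ℝ) : ℕ → ℤ → ℝ
  | 0 => fun r => if r = 1 then -1 else 0
  | d + 1 => fun r =>
      if 1 ≤ r ∧ r ≤ (n : ℤ) then Vup n q d (r + 1) - qe n q r * Vup n q d 1 else 0

/-- Basic separable potentials for `α ≤ 0`: `Vdn d = V^{(-d)}`, via the inverse
recursion `V_1^{(α)} = −q_n^{−1} V_n^{(α+1)}`, `V_{r+1}^{(α)} = V_r^{(α+1)} + q_r V_1^{(α)}`. -/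
def Vdn (n : ℕ) (q : Fin n → ℝ) : ℕ → ℤ → ℝ
  | 0 => fun r => if r = (n : ℤ) then -1 else 0
  | d + 1 => fun r =>
      if 1 ≤ r ∧ r ≤ (n : ℤ) then
        (if r = 1 then 0 else Vdn n q d (r - 1))
          + qe n q (r - 1) * (-(qe n q (n : ℤ))⁻¹ * Vdn n q d (n : ℤ))
      else 0

/-- The basic separable potential `V_r^{(α)}` (1-based integer index `r`). -/
def Vpot (n : ℕ) (q : Fin n → ℝ) (α r : ℤ) : ℝ :=
  if 0 ≤ α then
    if α ≤ (n : ℤ) - 1 then (if r = (n : ℤ) - α then -1 else 0)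
    else Vup n q (α - ((n : ℤ) - 1)).toNat r
  else Vdn n q (-α).toNat r

/-- The basic separable vector potential component `(P_r^{(γ)})^j`
(1-based integer indices `r`, `j`). -/
def Ppot (n : ℕ) (q : Fin n → ℝ) (γ r j : ℤ) : ℝ :=
  -∑ s ∈ Finset.range r.toNat, qe n q (s : ℤ) * Vpot n q (r + γ - (s : ℤ) - 1) j

/-- Partial derivative `∂f/∂q_j` of a real-valued function on `ℝ^n`. -/
def pd (n : ℕ) (j : Fin n) (f : (Fin n → ℝ) → ℝ) (x : Fin n → ℝ) : ℝ :=
  fderiv ℝ f x (Pi.single j 1)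

/-- Partial derivative `∂f/∂q_j` of a complex-valued function on `ℝ^n`. -/
def pdC (n : ℕ) (j : Fin n) (f : (Fin n → ℝ) → ℂ) (x : Fin n → ℝ) : ℂ :=
  fderiv ℝ f x (Pi.single j 1)

/-- Partial derivative in the `q_i` direction on phase space `ℝ^{2n}`. -/
def pdq (n : ℕ) (i : Fin n) (f : ((Fin n → ℝ) × (Fin n → ℝ)) → ℝ)
    (x : (Fin n → ℝ) × (Fin n → ℝ)) : ℝ :=
  fderiv ℝ f x (Pi.single i 1, 0)

/-- Partial derivative in the `p_i` direction on phase space `ℝ^{2n}`. -/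
def pdp (n : ℕ) (i : Fin n) (f : ((Fin n → ℝ) × (Fin n → ℝ)) → ℝ)
    (x : (Fin n → ℝ) × (Fin n → ℝ)) : ℝ :=
  fderiv ℝ f x (0, Pi.single i 1)

/-- Canonical Poisson bracket on `ℝ^{2n}`. -/
def pbr (n : ℕ) (f g : ((Fin n → ℝ) × (Fin n → ℝ)) → ℝ)
    (x : (Fin n → ℝ) × (Fin n → ℝ)) : ℝ :=
  ∑ i : Fin n, (pdq n i f x * pdp n i g x - pdp n i f x * pdq n i g x)

/-- Classical geodesic Stäckel Hamiltonian `E_r = ½ pᵀ A_r p`. -/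
def Ecl (n m : ℕ) (r : ℤ) (x : (Fin n → ℝ) × (Fin n → ℝ)) : ℝ :=
  (1 / 2) * ∑ k : Fin n, ∑ j : Fin n,
    x.2 k * Aent n m x.1 r ((k : ℤ) + 1) ((j : ℤ) + 1) * x.2 j

/-- Classical quasi-Stäckel term `W_r = Σ_j J_r^j p_j`. -/
def Wcl (n m : ℕ) (r : ℤ) (x : (Fin n → ℝ) × (Fin n → ℝ)) : ℝ :=
  ∑ j : Fin n, Jcomp n m r x.1 ((j : ℤ) + 1) * x.2 j

/-- Geodesic quasi-Stäckel Hamiltonian `𝓔_r = E_r + W_r`. -/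
def EWcl (n m : ℕ) (r : ℤ) (x : (Fin n → ℝ) × (Fin n → ℝ)) : ℝ :=
  Ecl n m r x + Wcl n m r x

/-- Classical magnetic term `M_r^{(γ)} = Σ_k (P_r^{(γ)})^k p_k`. -/
def Mcl (n : ℕ) (γ r : ℤ) (x : (Fin n → ℝ) × (Fin n → ℝ)) : ℝ :=
  ∑ k : Fin n, Ppot n x.1 γ r ((k : ℤ) + 1) * x.2 k

/-- The open set `Ω = {q : q_n ≠ 0}`. -/
def Omega (n : ℕ) : Set (Fin n → ℝ) := {x | qe n x (n : ℤ) ≠ 0}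

/-- Minimal quantization `Ê_r` of the geodesic part, written with the
derivatives to the right. -/
def Eop (n m : ℕ) (hb : ℝ) (r : ℤ) (f : (Fin n → ℝ) → ℂ) (x : Fin n → ℝ) : ℂ :=
  -(((hb : ℂ)) ^ 2 / 2) *
    ((∑ k : Fin n, ∑ j : Fin n,
        ((Aent n m x r ((k : ℤ) + 1) ((j : ℤ) + 1) : ℝ) : ℂ) *
          pdC n k (fun y => pdC n j f y) x)
      + (∑ j : Fin n,
          ((∑ k : Fin n, pd n k (fun y => Aent n m y r ((k : ℤ) + 1) ((j : ℤ) + 1)) x : ℝ) : ℂ) *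
            pdC n j f x)
      - ((m : ℂ) / 2) * (((qe n x (n : ℤ) : ℝ) : ℂ))⁻¹ *
          ∑ j : Fin n, ((Aent n m x r (n : ℤ) ((j : ℤ) + 1) : ℝ) : ℂ) * pdC n j f x)

/-- Minimal quantization `Ŵ_r = −iħ Σ_j J_r^j ∂_j`. -/
def Wop (n m : ℕ) (hb : ℝ) (r : ℤ) (f : (Fin n → ℝ) → ℂ) (x : Fin n → ℝ) : ℂ :=
  -(Complex.I * (hb : ℂ)) * ∑ j : Fin n, ((Jcomp n m r x ((j : ℤ) + 1) : ℝ) : ℂ) * pdC n j f x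

/-- Quantized geodesic quasi-Stäckel Hamiltonian `𝓔̂_r = Ê_r + Ŵ_r`. -/
def EWop (n m : ℕ) (hb : ℝ) (r : ℤ) (f : (Fin n → ℝ) → ℂ) (x : Fin n → ℝ) : ℂ :=
  Eop n m hb r f x + Wop n m hb r f x

/-- Minimal quantization `M̂_r^{(γ)}` of the magnetic term. -/
def Mop (n m : ℕ) (hb : ℝ) (γ r : ℤ) (f : (Fin n → ℝ) → ℂ) (x : Fin n → ℝ) : ℂ :=
  -(Complex.I * (hb : ℂ) / 2) *
    ((∑ j : Fin n, pdC n j (fun y => ((Ppot n y γ r ((j : ℤ) + 1) : ℝ) : ℂ) * f y) x)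
      + (∑ j : Fin n, ((Ppot n x γ r ((j : ℤ) + 1) : ℝ) : ℂ) * pdC n j f x)
      - ((m : ℂ) / 2) * (((qe n x (n : ℤ) : ℝ) : ℂ))⁻¹ *
          ((Ppot n x γ r (n : ℤ) : ℝ) : ℂ) * f x)

end P3

namespace P3

lemma qe_congr {n : ℕ} (q : Fin n → ℝ) {a b : ℤ} (h : a = b) : qe n q a = qe n q b := by rw [h]
lemma qe_out {n : ℕ} (q : Fin n → ℝ) {k : ℤ} (h : k < 0 ∨ (n : ℤ) < k) : qe n q k = 0 := by
  unfold qe; split_ifs with h1 h2 <;> first | rfl | omega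
lemma qe_zero {n : ℕ} (q : Fin n → ℝ) : qe n q 0 = 1 := by
  unfold qe; split_ifs with h1 h2 <;> first | rfl | omega
lemma sum_L {n : ℕ} (hn : 0 < n) (q : Fin n → ℝ) (i : Fin n) (f : Fin n → ℝ) :
    ∑ k : Fin n, Lmat n q i k * f k
      = -q i * f ⟨0, hn⟩ + (if h : (i : ℕ) + 1 < n then f ⟨(i : ℕ) + 1, h⟩ else 0) := by
  have key : ∀ k : Fin n, Lmat n q i k * f k
      = (if k = (⟨0, hn⟩ : Fin n) then -q i * f ⟨0, hn⟩ else 0)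
        + (if h : (i : ℕ) + 1 < n then
            (if k = (⟨(i : ℕ) + 1, h⟩ : Fin n) then f ⟨(i : ℕ) + 1, h⟩ else 0) else 0) := by
    intro k
    by_cases h1 : (k : ℕ) = 0
    · have e : k = ⟨0, hn⟩ := Fin.ext h1
      subst e
      rw [if_pos rfl]
      have hL : Lmat n q i ⟨0, hn⟩ = -q i := by unfold Lmat; simp
      have hd : (if h : (i : ℕ) + 1 < n then
          (if (⟨0, hn⟩ : Fin n) = (⟨(i : ℕ) + 1, h⟩ : Fin n) then f ⟨(i : ℕ) + 1, h⟩ else 0)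
          else 0) = 0 := by
        split_ifs with ha hb
        · exfalso; have := congrArg Fin.val hb; simp at this
        · rfl
        · rfl
      rw [hL, hd]; ring
    · by_cases h2 : (k : ℕ) = (i : ℕ) + 1
      · have hlt : (i : ℕ) + 1 < n := h2 ▸ k.isLt
        have e : k = ⟨(i : ℕ) + 1, hlt⟩ := Fin.ext h2
        subst e
        rw [dif_pos hlt, if_pos rfl,
          if_neg (fun hb => by have := congrArg Fin.val hb; simp at this)]
        have hL : Lmat n q i ⟨(i : ℕ) + 1, hlt⟩ = 1 := by unfold Lmat; simp
        rw [hL]; ring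
      · have hL : Lmat n q i k = 0 := by
          unfold Lmat; simp only [Matrix.of_apply]; rw [if_neg h1, if_neg h2]
        have hd : (if h : (i : ℕ) + 1 < n then
            (if k = (⟨(i : ℕ) + 1, h⟩ : Fin n) then f ⟨(i : ℕ) + 1, h⟩ else 0) else 0) = 0 := by
          split_ifs with ha hb
          · exact absurd (by rw [hb]) h2
          · rfl
          · rfl
        rw [hL, hd, if_neg (fun hb => h1 (by rw [hb]))]; ring
  rw [Finset.sum_congr rfl (fun k _ => key k), Finset.sum_add_distrib,
    Finset.sum_ite_eq' Finset.univ (⟨0, hn⟩ : Fin n) (fun _ => -q i * f ⟨0, hn⟩)]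
  simp only [Finset.mem_univ, if_pos]
  congr 1
  split_ifs with h
  · rw [Finset.sum_ite_eq' Finset.univ (⟨(i : ℕ) + 1, h⟩ : Fin n) (fun _ => f ⟨(i : ℕ) + 1, h⟩)]
    simp
  · simp


lemma qe_coord {n : ℕ} (q : Fin n → ℝ) (i : Fin n) : qe n q ((i : ℤ) + 1) = q i := by
  unfold qe
  rw [dif_pos (by constructor <;> omega)]
  congr 1
  ext
  simp

def gci (n m : ℕ) (I J : ℤ) : ℤ :=
  (if I ≤ (n : ℤ) - m ∧ J ≤ (n : ℤ) - m then 1 else 0)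
  - (if (n : ℤ) + 1 - m ≤ I ∧ (n : ℤ) + 1 - m ≤ J then 1 else 0)

/-- Closed form of the entries of `G`. -/
def Gf (n m : ℕ) (q : Fin n → ℝ) (I J : ℤ) : ℝ :=
  (gci n m I J : ℝ) * qe n q (I + J + (m : ℤ) - (n : ℤ) - 1)
    + (if m = n + 1 then qe n q I * qe n q J else 0)

lemma step_id {n m : ℕ} (q : Fin n → ℝ) (hm : m ≤ n) {I J : ℤ}
    (hI1 : 1 ≤ I) (hI2 : I ≤ (n : ℤ)) (hJ1 : 1 ≤ J) (hJ2 : J ≤ (n : ℤ)) :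
    Gf n (m + 1) q I J
    = -qe n q I * Gf n m q 1 J
      + (if I + 1 ≤ (n : ℤ) then Gf n m q (I + 1) J else 0) := by
  unfold Gf
  have hm1 : ¬ m = n + 1 := by omega
  simp only [if_neg hm1]
  rw [qe_congr q (show I + J + ((m + 1 : ℕ) : ℤ) - n - 1 = I + J + m - n by push_cast; ring),
    qe_congr q (show 1 + J + (m : ℤ) - n - 1 = J + m - n by ring),
    qe_congr q (show (I + 1) + J + (m : ℤ) - n - 1 = I + J + m - n by ring)]
  by_cases hmn : m = n
  · subst hmn
    rw [if_pos rfl]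
    have g1 : gci m (m + 1) I J = -1 := by unfold gci; split_ifs <;> omega
    have g2 : gci m m 1 J = -1 := by unfold gci; split_ifs <;> omega
    have g3 : gci m m (I + 1) J = -1 := by unfold gci; split_ifs <;> omega
    rw [g1, g2, g3, qe_congr q (show J + (m : ℤ) - m = J by ring)]
    by_cases hIn : I + 1 ≤ (m : ℤ)
    · rw [if_pos hIn]; push_cast; ring
    · rw [if_neg hIn, qe_out q (show I + J + (m : ℤ) - m < 0 ∨ (m : ℤ) < I + J + (m : ℤ) - m by omega)]
      push_cast; ring
  · have hmlt : m < n := by omega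
    rw [if_neg (show ¬ m + 1 = n + 1 by omega)]
    have g2 : gci n m 1 J = if J ≤ (n : ℤ) - m then 1 else 0 := by
      unfold gci; split_ifs <;> omega
    rcases lt_trichotomy J ((n : ℤ) - m) with hJc | hJc | hJc
    · rw [qe_out q (show J + (m : ℤ) - n < 0 ∨ (n : ℤ) < J + (m : ℤ) - n by omega)]
      have g1 : gci n (m + 1) I J = if I ≤ (n : ℤ) - m - 1 then 1 else 0 := by
        unfold gci; split_ifs <;> omega
      have g3 : gci n m (I + 1) J = if I ≤ (n : ℤ) - m - 1 then 1 else 0 := by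
        unfold gci; split_ifs <;> omega
      rw [g1, g3]
      by_cases hIn : I + 1 ≤ (n : ℤ)
      · rw [if_pos hIn]; ring
      · rw [if_neg hIn, if_neg (show ¬ I ≤ (n : ℤ) - m - 1 by omega)]
        push_cast; ring
    · have hy : qe n q (J + (m : ℤ) - n) = 1 := by
        rw [qe_congr q (show J + (m : ℤ) - n = 0 by omega)]; exact qe_zero q
      have hx : qe n q (I + J + (m : ℤ) - n) = qe n q I := qe_congr q (by omega)
      have g1 : gci n (m + 1) I J = if (n : ℤ) - m ≤ I then -1 else 0 := by
        unfold gci; split_ifs <;> omega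
      have g3 : gci n m (I + 1) J = if I ≤ (n : ℤ) - m - 1 then 1 else 0 := by
        unfold gci; split_ifs <;> omega
      rw [g2, if_pos (show J ≤ (n : ℤ) - m by omega), hy, hx, g1, g3]
      by_cases hIc : I ≤ (n : ℤ) - m - 1
      · rw [if_neg (show ¬ (n : ℤ) - m ≤ I by omega), if_pos (show I + 1 ≤ (n : ℤ) by omega),
          if_pos hIc]
        push_cast; ring
      · rw [if_pos (show (n : ℤ) - m ≤ I by omega), if_neg hIc]
        by_cases hIn : I + 1 ≤ (n : ℤ)
        · rw [if_pos hIn]; push_cast; ring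
        · rw [if_neg hIn]; push_cast; ring
    · have g2' : gci n m 1 J = 0 := by rw [g2, if_neg (by omega)]
      have g1 : gci n (m + 1) I J = if (n : ℤ) - m ≤ I then -1 else 0 := by
        unfold gci; split_ifs <;> omega
      have g3 : gci n m (I + 1) J = if (n : ℤ) - m ≤ I then -1 else 0 := by
        unfold gci; split_ifs <;> omega
      rw [g2', g1, g3]
      by_cases hIn : I + 1 ≤ (n : ℤ)
      · rw [if_pos hIn]; push_cast; ring
      · rw [if_neg hIn,
          qe_out q (show I + J + (m : ℤ) - n < 0 ∨ (n : ℤ) < I + J + (m : ℤ) - n by omega)]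
        split_ifs <;> push_cast <;> ring

lemma Gmat_eq {n : ℕ} (hn : 0 < n) :
    ∀ m : ℕ, m ≤ n + 1 → ∀ (q : Fin n → ℝ) (i j : Fin n),
      Gmat n m q i j = Gf n m q ((i : ℤ) + 1) ((j : ℤ) + 1) := by
  intro m
  induction m with
  | zero =>
    intro _ q i j
    have hi : (i : ℕ) < n := i.isLt
    have hj : (j : ℕ) < n := j.isLt
    unfold Gmat Gf
    rw [pow_zero, Matrix.one_mul]
    unfold G0mat gci
    simp only [Matrix.of_apply]
    rw [if_pos (by constructor <;> omega), if_neg (by omega),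
      if_neg (show ¬ (0 : ℕ) = n + 1 by omega),
      qe_congr q (show (i : ℤ) + (j : ℤ) + 1 - n
        = ((i : ℤ) + 1) + ((j : ℤ) + 1) + ((0 : ℕ) : ℤ) - n - 1 by push_cast; ring)]
    push_cast
    ring
  | succ m ih =>
    intro hm q i j
    have hi : (i : ℕ) < n := i.isLt
    have hj : (j : ℕ) < n := j.isLt
    have hm' : m ≤ n := by omega
    have hG : Gmat n (m + 1) q = Lmat n q * Gmat n m q := by
      unfold Gmat; rw [pow_succ', Matrix.mul_assoc]
    rw [hG, Matrix.mul_apply, sum_L hn q i (fun k => Gmat n m q k j),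
      ih (by omega) q ⟨0, hn⟩ j]
    have hz : ((⟨0, hn⟩ : Fin n) : ℤ) + 1 = 1 := by simp
    rw [hz]
    have hd : (if h : (i : ℕ) + 1 < n then Gmat n m q ⟨(i : ℕ) + 1, h⟩ j else 0)
        = (if ((i : ℤ) + 1) + 1 ≤ (n : ℤ) then
            Gf n m q (((i : ℤ) + 1) + 1) ((j : ℤ) + 1) else 0) := by
      by_cases h : (i : ℕ) + 1 < n
      · rw [dif_pos h, if_pos (by push_cast; omega), ih (by omega) q ⟨(i : ℕ) + 1, h⟩ j]
        have : ((⟨(i : ℕ) + 1, h⟩ : Fin n) : ℤ) + 1 = ((i : ℤ) + 1) + 1 := by push_cast; ring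
        rw [this]
      · rw [dif_neg h, if_neg (by push_cast; omega)]
    rw [hd, ← qe_coord q i]
    exact (step_id q hm' (by omega) (by omega) (by omega) (by omega)).symm

lemma diffAt_qe {n : ℕ} (t : ℤ) (x : Fin n → ℝ) :
    DifferentiableAt ℝ (fun y => qe n y t) x := by
  by_cases h : 1 ≤ t ∧ t ≤ (n : ℤ)
  · have e : (fun y : Fin n → ℝ => qe n y t) = fun y => y ⟨(t - 1).toNat, by omega⟩ := by
      funext y; unfold qe; rw [dif_pos h]
    rw [e]
    exact (ContinuousLinearMap.proj (⟨(t - 1).toNat, by omega⟩ : Fin n)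
      : (Fin n → ℝ) →L[ℝ] ℝ).differentiableAt
  · have e : (fun y : Fin n → ℝ => qe n y t) = fun _ => (if t = 0 then (1 : ℝ) else 0) := by
      funext y; unfold qe; rw [dif_neg h]
    rw [e]
    exact differentiableAt_const _

lemma pd_qe {n : ℕ} (l : Fin n) (t : ℤ) (x : Fin n → ℝ) :
    pd n l (fun y => qe n y t) x = if t = (l : ℤ) + 1 then 1 else 0 := by
  unfold pd
  by_cases h : 1 ≤ t ∧ t ≤ (n : ℤ)
  · have e : (fun y : Fin n → ℝ => qe n y t) = fun y => y ⟨(t - 1).toNat, by omega⟩ := by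
      funext y; unfold qe; rw [dif_pos h]
    rw [e, show (fun y : Fin n → ℝ => y (⟨(t - 1).toNat, by omega⟩ : Fin n))
        = ⇑(ContinuousLinearMap.proj (R := ℝ) (⟨(t - 1).toNat, by omega⟩ : Fin n)) from rfl,
      ContinuousLinearMap.fderiv, ContinuousLinearMap.proj_apply, Pi.single_apply]
    have hl : (l : ℕ) < n := l.isLt
    have hiff : ((⟨(t - 1).toNat, by omega⟩ : Fin n) = l) ↔ (t = (l : ℤ) + 1) := by
      rw [Fin.ext_iff, Fin.val_mk]
      constructor <;> intro hh <;> omega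
    rw [if_congr hiff rfl rfl]
  · have e : (fun y : Fin n → ℝ => qe n y t) = fun _ => (if t = 0 then (1 : ℝ) else 0) := by
      funext y; unfold qe; rw [dif_neg h]
    have hl : (l : ℕ) < n := l.isLt
    rw [e, fderiv_fun_const]
    simp only [Pi.zero_apply, ContinuousLinearMap.zero_apply]
    rw [if_neg (by omega)]

lemma pd_cmul_qe {n : ℕ} (l : Fin n) (c : ℝ) (T : ℤ) (x : Fin n → ℝ) :
    pd n l (fun y => c * qe n y T) x = c * (if T = (l : ℤ) + 1 then 1 else 0) := by
  unfold pd
  rw [fderiv_const_mul (diffAt_qe T x)]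
  have e := pd_qe l T x
  unfold pd at e
  simp only [ContinuousLinearMap.coe_smul', Pi.smul_apply, smul_eq_mul]
  rw [e]

lemma pd_shape {n : ℕ} (l : Fin n) (c : ℝ) (T : ℤ) (P : Prop) [Decidable P] (A B : ℤ)
    (x : Fin n → ℝ) :
    pd n l (fun y => c * qe n y T + (if P then qe n y A * qe n y B else 0)) x
      = c * (if T = (l : ℤ) + 1 then 1 else 0)
        + (if P then (if A = (l : ℤ) + 1 then 1 else 0) * qe n x B
            + qe n x A * (if B = (l : ℤ) + 1 then 1 else 0) else 0) := by
  by_cases hP : P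
  · simp only [if_pos hP]
    unfold pd
    rw [fderiv_fun_add (g := fun y => qe n y A * qe n y B) (((diffAt_qe T x).const_mul c) : DifferentiableAt ℝ _ x)
        ((diffAt_qe A x).mul (diffAt_qe B x)),
      fderiv_const_mul (diffAt_qe T x), fderiv_fun_mul (diffAt_qe A x) (diffAt_qe B x)]
    have eT := pd_qe l T x
    have eA := pd_qe l A x
    have eB := pd_qe l B x
    unfold pd at eT eA eB
    simp only [ContinuousLinearMap.add_apply, ContinuousLinearMap.coe_smul', Pi.smul_apply,
      smul_eq_mul]
    rw [eT, eA, eB]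
    ring
  · simp only [if_neg hP, add_zero]
    exact pd_cmul_qe l c T x
/-- Integer coefficient of `J_r^k`. -/
def cJi (n m : ℕ) (r k : ℤ) : ℤ :=
  if r = 1 then 0
  else if inI1 n m r then
    (if (n : ℤ) + 2 - m - r ≤ k ∧ k ≤ (n : ℤ) - m then (n : ℤ) + 1 - m - k else 0)
  else if inI2 n m r then
    (if (n : ℤ) + 2 - m ≤ k ∧ k ≤ 2 * (n : ℤ) + 2 - m - r then -((n : ℤ) + 1 - m - k) else 0)
  else 0


lemma Jcomp_eq (n m : ℕ) (r : ℤ) (q : Fin n → ℝ) (k : ℤ) :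
    Jcomp n m r q k = (cJi n m r k : ℝ) * qe n q ((m : ℤ) + r - ↑n - 2 + k) := by
  unfold Jcomp cJi
  split_ifs <;> push_cast <;> ring
lemma cJi_support {n m : ℕ} {r k : ℤ} (hm : m ≤ n + 1) (hr : inI1 n m r ∨ inI2 n m r)
    (h : ¬ (1 ≤ k ∧ k ≤ (n : ℤ))) : cJi n m r k = 0 := by
  unfold cJi inI1 inI2 at *
  split_ifs <;> omega

set_option maxHeartbeats 4000000 in
lemma coeff_id (n m : ℕ) (r : ℤ) (hn : 1 ≤ n) (hm : m ≤ n + 1)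
    (hr : inI1 n m r ∨ inI2 n m r) (I J : ℤ) (hI : 1 ≤ I ∧ I ≤ (n : ℤ))
    (hJ : 1 ≤ J ∧ J ≤ (n : ℤ))
    (hT : 0 ≤ (m : ℤ) + r - n - 2 + (I + J + m - n - 1)
      ∧ (m : ℤ) + r - n - 2 + (I + J + m - n - 1) ≤ (n : ℤ)) :
    gci n m I J * cJi n m r (I + J + m - n - 1)
      - cJi n m r I * (if 1 ≤ (m : ℤ) + r - n - 2 + I ∧ (m : ℤ) + r - n - 2 + I ≤ (n : ℤ)
          then gci n m ((m : ℤ) + r - n - 2 + I) J else 0)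
      - cJi n m r J * (if 1 ≤ (m : ℤ) + r - n - 2 + J ∧ (m : ℤ) + r - n - 2 + J ≤ (n : ℤ)
          then gci n m I ((m : ℤ) + r - n - 2 + J) else 0) = 0 := by
  by_cases hr1 : r = 1
  · simp only [cJi, if_pos hr1]
    ring
  · have hI1 : ∀ k : ℤ, inI1 n m r → cJi n m r k
        = (if (n : ℤ) + 2 - m - r ≤ k ∧ k ≤ (n : ℤ) - m then (n : ℤ) + 1 - m - k else 0) := by
      intro k h1
      unfold cJi
      rw [if_neg hr1, if_pos h1]
    have hI2 : ∀ k : ℤ, ¬ inI1 n m r → inI2 n m r → cJi n m r k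
        = (if (n : ℤ) + 2 - m ≤ k ∧ k ≤ 2 * (n : ℤ) + 2 - m - r
            then -((n : ℤ) + 1 - m - k) else 0) := by
      intro k h1 h2
      unfold cJi
      rw [if_neg hr1, if_neg h1, if_pos h2]
    by_cases h1 : inI1 n m r
    · simp only [hI1 _ h1]
      unfold gci inI1 at *
      split_ifs <;> omega
    · have h2 : inI2 n m r := by tauto
      simp only [hI2 _ h1 h2]
      unfold gci inI1 inI2 at *
      split_ifs <;> omega

lemma final_id (n m : ℕ) (r : ℤ) (q : Fin n → ℝ) (hn : 1 ≤ n) (hm : m ≤ n + 1)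
    (hr : inI1 n m r ∨ inI2 n m r) (I J : ℤ) (hI : 1 ≤ I ∧ I ≤ (n : ℤ))
    (hJ : 1 ≤ J ∧ J ≤ (n : ℤ)) :
    (cJi n m r (I + J + (m : ℤ) - ↑n - 1) : ℝ) * qe n q ((m : ℤ) + r - ↑n - 2 + (I + J + (m : ℤ) - ↑n - 1)) * (gci n m I J : ℝ)
      + (if m = n + 1 then (1 : ℝ) else 0) * ((cJi n m r I : ℝ) * qe n q ((m : ℤ) + r - ↑n - 2 + I)) * qe n q J
      + (if m = n + 1 then (1 : ℝ) else 0) * ((cJi n m r J : ℝ) * qe n q ((m : ℤ) + r - ↑n - 2 + J)) * qe n q I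
      - (if 1 ≤ (m : ℤ) + r - ↑n - 2 + I ∧ (m : ℤ) + r - ↑n - 2 + I ≤ (n : ℤ) then Gf n m q ((m : ℤ) + r - ↑n - 2 + I) J * (cJi n m r I : ℝ) else 0)
      - (if 1 ≤ (m : ℤ) + r - ↑n - 2 + J ∧ (m : ℤ) + r - ↑n - 2 + J ≤ (n : ℤ) then Gf n m q I ((m : ℤ) + r - ↑n - 2 + J) * (cJi n m r J : ℝ) else 0)
      = 0 := by
  have hr' := hr
  unfold inI1 inI2 at hr'
  unfold Gf
  rw [qe_congr q (show ((m : ℤ) + r - ↑n - 2 + I) + J + (m : ℤ) - ↑n - 1 = (m : ℤ) + r - ↑n - 2 + (I + J + (m : ℤ) - ↑n - 1) by ring),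
    qe_congr q (show I + ((m : ℤ) + r - ↑n - 2 + J) + (m : ℤ) - ↑n - 1 = (m : ℤ) + r - ↑n - 2 + (I + J + (m : ℤ) - ↑n - 1) by ring),
    show (if m = n + 1 then qe n q ((m : ℤ) + r - ↑n - 2 + I) * qe n q J else 0)
      = (if m = n + 1 then (1 : ℝ) else 0) * (qe n q ((m : ℤ) + r - ↑n - 2 + I) * qe n q J) from by split_ifs <;> ring,
    show (if m = n + 1 then qe n q I * qe n q ((m : ℤ) + r - ↑n - 2 + J) else 0)
      = (if m = n + 1 then (1 : ℝ) else 0) * (qe n q I * qe n q ((m : ℤ) + r - ↑n - 2 + J)) from by split_ifs <;> ring]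
  have hI0 : ¬(1 ≤ (m : ℤ) + r - ↑n - 2 + I ∧ (m : ℤ) + r - ↑n - 2 + I ≤ (n : ℤ)) → (if m = n + 1 then (1 : ℝ) else 0) * qe n q ((m : ℤ) + r - ↑n - 2 + I) = 0 := by
    intro h
    by_cases hm1 : m = n + 1
    · rw [if_pos hm1, one_mul]
      exact qe_out q (by omega)
    · rw [if_neg hm1, zero_mul]
  have hJ0 : ¬(1 ≤ (m : ℤ) + r - ↑n - 2 + J ∧ (m : ℤ) + r - ↑n - 2 + J ≤ (n : ℤ)) → (if m = n + 1 then (1 : ℝ) else 0) * qe n q ((m : ℤ) + r - ↑n - 2 + J) = 0 := by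
    intro h
    by_cases hm1 : m = n + 1
    · rw [if_pos hm1, one_mul]
      exact qe_out q (by omega)
    · rw [if_neg hm1, zero_mul]
  by_cases hRT : 0 ≤ (m : ℤ) + r - ↑n - 2 + (I + J + (m : ℤ) - ↑n - 1) ∧ (m : ℤ) + r - ↑n - 2 + (I + J + (m : ℤ) - ↑n - 1) ≤ (n : ℤ)
  · have hz := coeff_id n m r hn hm hr I J hI hJ hRT
    by_cases hRI : 1 ≤ (m : ℤ) + r - ↑n - 2 + I ∧ (m : ℤ) + r - ↑n - 2 + I ≤ (n : ℤ) <;> by_cases hRJ : 1 ≤ (m : ℤ) + r - ↑n - 2 + J ∧ (m : ℤ) + r - ↑n - 2 + J ≤ (n : ℤ)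
    · rw [if_pos hRI, if_pos hRJ]
      rw [if_pos hRI, if_pos hRJ] at hz
      have hzR := congrArg (fun z : ℤ => (z : ℝ)) hz
      push_cast at hzR
      linear_combination qe n q ((m : ℤ) + r - ↑n - 2 + (I + J + (m : ℤ) - ↑n - 1)) * hzR
    · rw [if_pos hRI, if_neg hRJ]
      rw [if_pos hRI, if_neg hRJ] at hz
      have hzR := congrArg (fun z : ℤ => (z : ℝ)) hz
      push_cast at hzR
      linear_combination qe n q ((m : ℤ) + r - ↑n - 2 + (I + J + (m : ℤ) - ↑n - 1)) * hzR
        + ((cJi n m r J : ℝ) * qe n q I) * hJ0 hRJ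
    · rw [if_neg hRI, if_pos hRJ]
      rw [if_neg hRI, if_pos hRJ] at hz
      have hzR := congrArg (fun z : ℤ => (z : ℝ)) hz
      push_cast at hzR
      linear_combination qe n q ((m : ℤ) + r - ↑n - 2 + (I + J + (m : ℤ) - ↑n - 1)) * hzR
        + ((cJi n m r I : ℝ) * qe n q J) * hI0 hRI
    · rw [if_neg hRI, if_neg hRJ]
      rw [if_neg hRI, if_neg hRJ] at hz
      have hzR := congrArg (fun z : ℤ => (z : ℝ)) hz
      push_cast at hzR
      linear_combination qe n q ((m : ℤ) + r - ↑n - 2 + (I + J + (m : ℤ) - ↑n - 1)) * hzR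
        + ((cJi n m r I : ℝ) * qe n q J) * hI0 hRI
        + ((cJi n m r J : ℝ) * qe n q I) * hJ0 hRJ
  · have hq0 : qe n q ((m : ℤ) + r - ↑n - 2 + (I + J + (m : ℤ) - ↑n - 1)) = 0 := qe_out q (by omega)
    rw [hq0]
    by_cases hRI : 1 ≤ (m : ℤ) + r - ↑n - 2 + I ∧ (m : ℤ) + r - ↑n - 2 + I ≤ (n : ℤ) <;> by_cases hRJ : 1 ≤ (m : ℤ) + r - ↑n - 2 + J ∧ (m : ℤ) + r - ↑n - 2 + J ≤ (n : ℤ)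
    · rw [if_pos hRI, if_pos hRJ]; ring
    · rw [if_pos hRI, if_neg hRJ]
      linear_combination ((cJi n m r J : ℝ) * qe n q I) * hJ0 hRJ
    · rw [if_neg hRI, if_pos hRJ]
      linear_combination ((cJi n m r I : ℝ) * qe n q J) * hI0 hRI
    · rw [if_neg hRI, if_neg hRJ]
      linear_combination ((cJi n m r I : ℝ) * qe n q J) * hI0 hRI
        + ((cJi n m r J : ℝ) * qe n q I) * hJ0 hRJ

lemma sum_delta {n : ℕ} (T : ℤ) (g : ℤ → ℝ) :
    ∑ l : Fin n, (if T = (l : ℤ) + 1 then g ((l : ℤ) + 1) else 0)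
      = if 1 ≤ T ∧ T ≤ (n : ℤ) then g T else 0 := by
  by_cases h : 1 ≤ T ∧ T ≤ (n : ℤ)
  · rw [if_pos h, Finset.sum_eq_single_of_mem (⟨(T - 1).toNat, by omega⟩ : Fin n)
      (Finset.mem_univ _)]
    · rw [if_pos (by simp only [Fin.val_mk]; omega)]
      congr 1
      simp only [Fin.val_mk]
      omega
    · intro b _ hb
      exact if_neg (fun hTb => hb (by ext; simp only [Fin.val_mk]; omega))
  · rw [if_neg h]
    apply Finset.sum_eq_zero
    intro l _
    exact if_neg (fun hTl => h (by have hl := l.isLt; omega))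

end P3

namespace P3

/-- Each `J_r`, `r ∈ I_1^m ∪ I_2^m`, is a Killing vector
field of the contravariant metric `G`: the Lie derivative of `G` along `J_r`
vanishes identically. -/
theorem J_is_killing_for_G (n m : ℕ) (hn : 1 ≤ n) (hm : m ≤ n + 1)
    (r : ℤ) (hr : inI1 n m r ∨ inI2 n m r)
    (q : Fin n → ℝ) (i j : Fin n) :
    ∑ l : Fin n,
      (Jcomp n m r q ((l : ℤ) + 1) * pd n l (fun y => Gmat n m y i j) q
        - Gmat n m q l j * pd n l (fun y => Jcomp n m r y ((i : ℤ) + 1)) q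
        - Gmat n m q i l * pd n l (fun y => Jcomp n m r y ((j : ℤ) + 1)) q) = 0 := by
  classical
  have hn0 : 0 < n := hn
  have hi := i.isLt
  have hj := j.isLt
  set g1 : ℤ → ℝ := fun t => (cJi n m r t : ℝ) * qe n q ((m : ℤ) + r - ↑n - 2 + t)
      * (gci n m ((i : ℤ) + 1) ((j : ℤ) + 1) : ℝ) with hg1
  set g2 : ℤ → ℝ := fun t => (if m = n + 1 then (1 : ℝ) else 0)
      * ((cJi n m r t : ℝ) * qe n q ((m : ℤ) + r - ↑n - 2 + t)) * qe n q ((j : ℤ) + 1) with hg2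
  set g3 : ℤ → ℝ := fun t => (if m = n + 1 then (1 : ℝ) else 0)
      * ((cJi n m r t : ℝ) * qe n q ((m : ℤ) + r - ↑n - 2 + t)) * qe n q ((i : ℤ) + 1) with hg3
  set g4 : ℤ → ℝ := fun t => Gf n m q t ((j : ℤ) + 1) * (cJi n m r ((i : ℤ) + 1) : ℝ) with hg4
  set g5 : ℤ → ℝ := fun t => Gf n m q ((i : ℤ) + 1) t * (cJi n m r ((j : ℤ) + 1) : ℝ) with hg5
  have hGfun : (fun y => Gmat n m y i j)
      = fun y => ((gci n m ((i : ℤ) + 1) ((j : ℤ) + 1) : ℤ) : ℝ)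
          * qe n y (((i : ℤ) + 1) + ((j : ℤ) + 1) + (m : ℤ) - ↑n - 1)
        + (if m = n + 1 then qe n y ((i : ℤ) + 1) * qe n y ((j : ℤ) + 1) else 0) := by
    funext y
    rw [Gmat_eq hn0 m hm y i j]
    rfl
  have hJfunI : (fun y => Jcomp n m r y ((i : ℤ) + 1))
      = fun y => (cJi n m r ((i : ℤ) + 1) : ℝ)
          * qe n y ((m : ℤ) + r - ↑n - 2 + ((i : ℤ) + 1)) :=
    funext fun y => Jcomp_eq n m r y _
  have hJfunJ : (fun y => Jcomp n m r y ((j : ℤ) + 1))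
      = fun y => (cJi n m r ((j : ℤ) + 1) : ℝ)
          * qe n y ((m : ℤ) + r - ↑n - 2 + ((j : ℤ) + 1)) :=
    funext fun y => Jcomp_eq n m r y _
  have key : ∀ l : Fin n,
      (Jcomp n m r q ((l : ℤ) + 1) * pd n l (fun y => Gmat n m y i j) q
        - Gmat n m q l j * pd n l (fun y => Jcomp n m r y ((i : ℤ) + 1)) q
        - Gmat n m q i l * pd n l (fun y => Jcomp n m r y ((j : ℤ) + 1)) q)
      = (if ((i : ℤ) + 1) + ((j : ℤ) + 1) + (m : ℤ) - ↑n - 1 = (l : ℤ) + 1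
            then g1 ((l : ℤ) + 1) else 0)
        + (if (i : ℤ) + 1 = (l : ℤ) + 1 then g2 ((l : ℤ) + 1) else 0)
        + (if (j : ℤ) + 1 = (l : ℤ) + 1 then g3 ((l : ℤ) + 1) else 0)
        - (if (m : ℤ) + r - ↑n - 2 + ((i : ℤ) + 1) = (l : ℤ) + 1 then g4 ((l : ℤ) + 1) else 0)
        - (if (m : ℤ) + r - ↑n - 2 + ((j : ℤ) + 1) = (l : ℤ) + 1 then g5 ((l : ℤ) + 1) else 0) := by
    intro l
    rw [hGfun, hJfunI, hJfunJ, pd_shape, pd_cmul_qe, pd_cmul_qe,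
      Jcomp_eq n m r q ((l : ℤ) + 1), Gmat_eq hn0 m hm q l j, Gmat_eq hn0 m hm q i l,
      hg1, hg2, hg3, hg4, hg5]
    split_ifs <;> ring
  rw [Finset.sum_congr rfl (fun l _ => key l)]
  rw [Finset.sum_sub_distrib, Finset.sum_sub_distrib, Finset.sum_add_distrib,
    Finset.sum_add_distrib, sum_delta _ g1, sum_delta _ g2, sum_delta _ g3,
    sum_delta _ g4, sum_delta _ g5]
  rw [if_pos (show 1 ≤ (i : ℤ) + 1 ∧ (i : ℤ) + 1 ≤ (n : ℤ) by omega),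
    if_pos (show 1 ≤ (j : ℤ) + 1 ∧ (j : ℤ) + 1 ≤ (n : ℤ) by omega)]
  have hfirst : (if 1 ≤ ((i : ℤ) + 1) + ((j : ℤ) + 1) + (m : ℤ) - ↑n - 1
        ∧ ((i : ℤ) + 1) + ((j : ℤ) + 1) + (m : ℤ) - ↑n - 1 ≤ (n : ℤ)
      then g1 (((i : ℤ) + 1) + ((j : ℤ) + 1) + (m : ℤ) - ↑n - 1) else 0)
      = g1 (((i : ℤ) + 1) + ((j : ℤ) + 1) + (m : ℤ) - ↑n - 1) := by
    split_ifs with hT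
    · rfl
    · rw [hg1]
      simp only []
      rw [cJi_support hm hr hT]
      push_cast
      ring
  rw [hfirst, hg1, hg2, hg3, hg4, hg5]
  simp only []
  have := final_id n m r q hn hm hr ((i : ℤ) + 1) ((j : ℤ) + 1)
    ⟨by omega, by omega⟩ ⟨by omega, by omega⟩
  linear_combination this

end P3
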